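/- Let p be an odd prime. Then 5 divides S_A(4) if and only if 5 divides p − 2. -/

import Mathlib

/-- The quaternary cyclotomic sequence of period 2p from Kim et al.:
`a 0 = 0`, `a p = 2`; for odd `i ≠ p`, value `0`/`1` according to Legendre symbol `(i/p) = ±1`;
for even `i > 0`, value `2`/`3` according to `((i/2)/p) = ±1`. -/
def seqA (p : ℕ) [Fact p.Prime] (i : ℕ) : ℤ :=
  if i = 0 then 0
  else if i = p then 2
  else if i % 2 = 1 then (if legendreSym p i = 1 then 0 else 1)
  else if legendreSym p (i / 2) = 1 then 2 else 3

/-- `S_A(4) = Σ_{i=0}^{2p-1} a(i)·4^i`. -/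
def SA (p : ℕ) [Fact p.Prime] : ℤ := ∑ i ∈ Finset.range (2 * p), seqA p i * 4 ^ i

/-- The Gauss sum `G_p = Σ_{a=1}^{p-1} (a/p)·4^{2a}`. -/
def Gp (p : ℕ) [Fact p.Prime] : ℤ := ∑ a ∈ Finset.Icc 1 (p - 1), legendreSym p a * 4 ^ (2 * a)

open Finset

lemma sum_range_two_mul' {M : Type*} [AddCommMonoid M] (n : ℕ) (f : ℕ → M) :
    ∑ i ∈ range (2 * n), f i = ∑ k ∈ range n, (f (2 * k) + f (2 * k + 1)) := by
  induction n with
  | zero => simp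
  | succ n ih =>
    have h : 2 * (n + 1) = (2 * n + 1) + 1 := by ring
    rw [h, sum_range_succ, sum_range_succ, ih, sum_range_succ]
    abel

lemma sum_range_zmod {p : ℕ} [NeZero p] (g : ZMod p → ℤ) :
    ∑ k ∈ range p, g (k : ZMod p) = ∑ a : ZMod p, g a := by
  refine Finset.sum_nbij' (fun k => (k : ZMod p)) (fun a => a.val) ?_ ?_ ?_ ?_ ?_
  · intro k _; exact mem_univ _
  · intro a _; exact mem_range.mpr a.val_lt
  · intro k hk; exact ZMod.val_cast_of_lt (mem_range.mp hk)
  · intro a _; exact ZMod.natCast_zmod_val a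
  · intro k _; rfl

lemma ringChar_ne_two' {p : ℕ} [Fact p.Prime] (hodd : Odd p) : ringChar (ZMod p) ≠ 2 := by
  rw [ZMod.ringChar_zmod_n]
  rintro rfl
  have := Nat.odd_iff.mp hodd; simp at this

lemma leg_eq_qc (p : ℕ) [Fact p.Prime] (k : ℕ) :
    legendreSym p (k : ℕ) = quadraticChar (ZMod p) ((k : ZMod p)) := by
  rw [legendreSym]; push_cast; rfl

lemma leg_sum_zero (p : ℕ) [Fact p.Prime] (hodd : Odd p) :
    ∑ k ∈ range p, legendreSym p (k : ℕ) = 0 := by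
  simp_rw [leg_eq_qc]
  rw [sum_range_zmod (fun a => quadraticChar (ZMod p) a)]
  exact quadraticChar_sum_zero (ringChar_ne_two' hodd)

lemma leg_sum_zero' (p : ℕ) [Fact p.Prime] (hodd : Odd p) :
    ∑ k ∈ range p, legendreSym p ((2 * k + 1 : ℕ)) = 0 := by
  have h : ∀ k : ℕ, legendreSym p ((2 * k + 1 : ℕ))
      = quadraticChar (ZMod p) (2 * (k : ZMod p) + 1) := by
    intro k; rw [leg_eq_qc]; push_cast; ring_nf
  simp_rw [h]
  rw [sum_range_zmod (fun a => quadraticChar (ZMod p) (2 * a + 1))]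
  have h2 : (2 : ZMod p) ≠ 0 := by
    rw [show ((2 : ZMod p)) = ((2 : ℕ) : ZMod p) by push_cast; ring,
      Ne, ZMod.natCast_eq_zero_iff]
    intro hdvd
    have h2' := Nat.le_of_dvd (by norm_num) hdvd
    have := (Fact.out : p.Prime).two_le
    have := Nat.odd_iff.mp hodd
    omega
  have hbij : Function.Bijective (fun a : ZMod p => 2 * a + 1) := by
    constructor
    · intro a b hab
      simp only [add_left_inj] at hab
      exact mul_left_cancel₀ h2 hab
    · intro b
      refine ⟨(b - 1) / 2, ?_⟩
      field_simp
      ring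
  rw [Fintype.sum_bijective _ hbij (fun a => quadraticChar (ZMod p) (2 * a + 1))
    (fun a => quadraticChar (ZMod p) a) (fun a => rfl)]
  exact quadraticChar_sum_zero (ringChar_ne_two' hodd)

lemma leg_ne_zero {p : ℕ} [Fact p.Prime] {n : ℕ} (hn : ¬ p ∣ n) :
    legendreSym p (n : ℕ) = 1 ∨ legendreSym p (n : ℕ) = -1 := by
  apply legendreSym.eq_one_or_neg_one
  rw [Int.cast_natCast, Ne, ZMod.natCast_eq_zero_iff]
  exact hn

lemma SA_mod5 (p : ℕ) [Fact p.Prime] (hodd : Odd p) :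
    ((SA p : ℤ) : ZMod 5) = 2 * (p : ZMod 5) + 1 := by
  have hpodd : p % 2 = 1 := Nat.odd_iff.mp hodd
  have hp3 : 3 ≤ p := by
    have := (Fact.out : p.Prime).two_le
    omega
  obtain ⟨k0, hpk0⟩ : ∃ k0, p = 2 * k0 + 1 := ⟨(p - 1) / 2, by omega⟩
  have key : ∀ k ∈ range p,
      ((seqA p (2*k) * 4 ^ (2*k) : ℤ) : ZMod 5) + ((seqA p (2*k+1) * 4 ^ (2*k+1) : ℤ) : ZMod 5)
      = (2 * ((legendreSym p (k : ℕ) : ℤ) : ZMod 5)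
          + 3 * ((legendreSym p ((2*k+1 : ℕ)) : ℤ) : ZMod 5) - 3)
        + (if k = k0 then 1 else 0) := by
    intro k hk
    rw [mem_range] at hk
    rw [Int.cast_mul, Int.cast_mul, Int.cast_pow, Int.cast_pow,
      show ((4:ℤ) : ZMod 5) = 4 by norm_num]
    have h4a : (4 : ZMod 5) ^ (2*k) = 1 := by
      have h16 : (4 : ZMod 5) ^ 2 = 1 := by decide
      rw [pow_mul, h16, one_pow]
    have h4b : (4 : ZMod 5) ^ (2*k+1) = 4 := by
      rw [pow_succ, h4a, one_mul]
    rw [h4a, h4b, mul_one]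
    rcases eq_or_ne k 0 with rfl | hkne
    · have e0 : seqA p (2*0) = 0 := by simp [seqA]
      have e1 : seqA p (2*0+1) = 0 := by
        have l1' : legendreSym p ((1 : ℕ) : ℤ) = 1 := by exact_mod_cast legendreSym.at_one p
        rw [show 2*0+1 = 1 from rfl, seqA, if_neg one_ne_zero, if_neg (by omega : ¬ 1 = p),
          if_pos (by norm_num : 1 % 2 = 1)]
        norm_num [legendreSym.at_one]
      have l0 : legendreSym p ((0:ℕ) : ℤ) = 0 := by
        exact_mod_cast legendreSym.at_zero p
      have l1 : legendreSym p ((2*0+1:ℕ) : ℤ) = 1 := by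
        exact_mod_cast legendreSym.at_one p
      rw [if_neg (by omega : ¬ (0:ℕ) = k0), e0, e1, l0, l1]
      norm_num
    · have hk1 : 1 ≤ k := by omega
      have hndk : ¬ p ∣ k := fun hd => by have := Nat.le_of_dvd (by omega) hd; omega
      have e2 : seqA p (2*k) = if legendreSym p (k : ℕ) = 1 then 2 else 3 := by
        rw [seqA, if_neg (by omega), if_neg (by omega), if_neg (by omega),
          show ((2*k : ℕ) : ℤ) / 2 = ((k : ℕ) : ℤ) by push_cast; omega]
      rcases eq_or_ne k k0 with rfl | hkk0
      · have e3 : seqA p (2*k+1) = 2 := by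
          rw [seqA, if_neg (by omega), if_pos (by omega)]
        have l3 : legendreSym p ((2*k+1 : ℕ) : ℤ) = 0 := by
          rw [legendreSym.eq_zero_iff, Int.cast_natCast, ZMod.natCast_eq_zero_iff]
          exact ⟨1, by omega⟩
        rw [if_pos rfl, e2, e3, l3]
        rcases leg_ne_zero (p := p) hndk with h | h <;> rw [h] <;> norm_num <;> decide
      · have hne : 2*k+1 ≠ p := by omega
        have e3 : seqA p (2*k+1) = if legendreSym p ((2*k+1 : ℕ)) = 1 then 0 else 1 := by
          rw [seqA, if_neg (by omega), if_neg hne, if_pos (by omega)]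
        have hnd2 : ¬ p ∣ (2*k+1) := by
          intro hd
          obtain ⟨m, hm⟩ := hd
          have hmlt : m < 2 := by
            by_contra hge
            push_neg at hge
            have h2p : 2 * p ≤ p * m := by
              calc 2 * p = p * 2 := by ring
                _ ≤ p * m := Nat.mul_le_mul_left p hge
            rw [← hm] at h2p
            omega
          interval_cases m <;> omega
        rw [if_neg hkk0, e2, e3]
        rcases leg_ne_zero (p := p) hndk with h | h <;>
          rcases leg_ne_zero (p := p) hnd2 with h' | h' <;>
          rw [h, h'] <;> norm_num <;> decide
  rw [SA, Int.cast_sum,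
    sum_range_two_mul' p (fun i => ((seqA p i * 4 ^ i : ℤ) : ZMod 5)),
    Finset.sum_congr rfl key, Finset.sum_add_distrib,
    Finset.sum_ite_eq' (range p) k0 (fun _ => (1 : ZMod 5)),
    if_pos (mem_range.mpr (by omega : k0 < p))]
  have s1 : ∑ k ∈ range p, ((legendreSym p (k : ℕ) : ℤ) : ZMod 5) = 0 := by
    rw [← Int.cast_sum, leg_sum_zero p hodd, Int.cast_zero]
  have s2 : ∑ k ∈ range p, ((legendreSym p ((2*k+1 : ℕ)) : ℤ) : ZMod 5) = 0 := by
    rw [← Int.cast_sum, leg_sum_zero' p hodd, Int.cast_zero]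
  have expand : ∑ k ∈ range p,
      (2 * ((legendreSym p (k : ℕ) : ℤ) : ZMod 5)
        + 3 * ((legendreSym p ((2*k+1 : ℕ)) : ℤ) : ZMod 5) - 3)
      = 2 * (∑ k ∈ range p, ((legendreSym p (k : ℕ) : ℤ) : ZMod 5))
        + 3 * (∑ k ∈ range p, ((legendreSym p ((2*k+1 : ℕ)) : ℤ) : ZMod 5))
        - 3 * p := by
    rw [Finset.sum_sub_distrib, Finset.sum_add_distrib, ← Finset.mul_sum, ← Finset.mul_sum,
      Finset.sum_const, Finset.card_range]
    push_cast
    ring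
  rw [expand, s1, s2]
  have h5 : ((5 : ℕ) : ZMod 5) = 0 := by decide
  have hpc : (p : ZMod 5) = 2 * k0 + 1 := by rw [hpk0]; push_cast; ring
  rw [hpc]
  linear_combination (-(2 * (k0 : ZMod 5) + 1)) * h5

/-- `5 ∣ S_A(4)` iff `5 ∣ p − 2`. -/
theorem stmt5 (p : ℕ) [Fact p.Prime] (hodd : Odd p) :
    (5 : ℤ) ∣ SA p ↔ (5 : ℤ) ∣ (p : ℤ) - 2 := by
  have cast5 : ((5:ℕ):ℤ) = 5 := by norm_num
  rw [← cast5, ← ZMod.intCast_zmod_eq_zero_iff_dvd, ← ZMod.intCast_zmod_eq_zero_iff_dvd,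
    SA_mod5 p hodd]
  push_cast
  have h : ∀ x : ZMod 5, 2 * x + 1 = 0 ↔ x - 2 = 0 := by decide
  exact h _
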